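/- Under the isomorphism ζ_{M|N} : Y_μ(s) → Y_{←μ}(s†), the Gauss decomposition blocks transform as ζ(D_{a;i,j}(u)) = D'_{n+1-a; μ_a+1-i, μ_a+1-j}(u) for 1≤a≤n, ζ(E_{a;h,k}(u)) = -F_{n-a; μ_a+1-h, μ_{a+1}+1-k}(u) and ζ(F_{a;k,h}(u)) = -E_{n-a; μ_{a+1}+1-k, μ_a+1-h}(u) for 1≤a≤n-1, where ←μ = (μ_n,...,μ_1) and the right-hand blocks are taken with respect to ←μ. -/

import Mathlib

noncomputable section

namespace SuperYangian

/-- The sign `(-1)^x` for `x : ZMod 2`. -/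
def sgn (x : ZMod 2) : ℂ := if x = 0 then 1 else -1

variable {A : Type*}

/-- The supercommutator `[x, y] = x*y - ε • (y*x)` with prescribed sign `ε`
(for homogeneous `x`, `y` one takes `ε = (-1)^{|x||y|}`). -/
def scomm [Ring A] [Algebra ℂ A] (ε : ℂ) (x y : A) : A := x * y - ε • (y * x)

/-- `off μ a = μ 0 + ⋯ + μ (a-1)`. -/
def off (μ : ℕ → ℕ) (a : ℕ) : ℕ := ∑ b ∈ Finset.range a, μ b

/-- A family `t i j r` (the coefficient of `u^{-r}` in `t_{ij}(u)`, with 0-based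
indices `i j < d`) satisfying the defining RTT relations of the super Yangian
`Y(gl_{M|N})` with parity sequence `p`; the super Yangian itself, via
`t_{i+1,j+1}^{(r)} = t i j r`, is the universal such family. -/
structure RTT (A : Type*) [Ring A] [Algebra ℂ A] (d : ℕ) (p : ℕ → ZMod 2) where
  t : ℕ → ℕ → ℕ → A
  t_zero : ∀ i j, t i j 0 = if i = j then (1 : A) else 0
  rtt : ∀ i j h k r s : ℕ, i < d → j < d → h < d → k < d →
    scomm (sgn ((p i + p j) * (p h + p k))) (t i j r) (t h k s) =
      sgn (p i * p j + p i * p h + p j * p h) •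
        ∑ g ∈ Finset.range (min r s),
          (t h j g * t i k (r + s - 1 - g) - t h j (r + s - 1 - g) * t i k g)

/-- Gauss decomposition data `T(u) = F(u) D(u) E(u)` with respect to the composition
`μ = (μ 0, …, μ (n-1))`, in coefficient form.  `E a b i j r` is the coefficient of
`u^{-r}` in the `(i,j)`-entry of the block `E_{a,b}(u)` (0-based blocks and entries),
extended by the identity on the diagonal blocks and by `0` below them; similarly `F`.
`D a` are the diagonal blocks and `D' a` their inverses.  Since the Gauss
decomposition is unique, this data consists exactly of the quasideterminant blocks. -/
structure Gauss [Ring A] [Algebra ℂ A] (T : ℕ → ℕ → ℕ → A) (n : ℕ) (μ : ℕ → ℕ) where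
  D : ℕ → ℕ → ℕ → ℕ → A
  D' : ℕ → ℕ → ℕ → ℕ → A
  E : ℕ → ℕ → ℕ → ℕ → ℕ → A
  F : ℕ → ℕ → ℕ → ℕ → ℕ → A
  E_diag : ∀ a i j r, E a a i j r = if i = j ∧ r = 0 then 1 else 0
  E_low : ∀ a b i j r, b < a → E a b i j r = 0
  E_zero : ∀ a b i j, a < b → E a b i j 0 = 0
  F_diag : ∀ a i j r, F a a i j r = if i = j ∧ r = 0 then 1 else 0
  F_high : ∀ a b i j r, a < b → F a b i j r = 0
  F_zero : ∀ a b i j, b < a → F a b i j 0 = 0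
  D_zero : ∀ a i j, D a i j 0 = if i = j then (1 : A) else 0
  D_inv : ∀ a i j r, a < n → i < μ a → j < μ a →
    ∑ q ∈ Finset.range (μ a), ∑ e ∈ Finset.range (r + 1), D a i q e * D' a q j (r - e) =
      if i = j ∧ r = 0 then 1 else 0
  D_inv' : ∀ a i j r, a < n → i < μ a → j < μ a →
    ∑ q ∈ Finset.range (μ a), ∑ e ∈ Finset.range (r + 1), D' a i q e * D a q j (r - e) =
      if i = j ∧ r = 0 then 1 else 0
  decomp : ∀ a b i j r, a < n → b < n → i < μ a → j < μ b →
    T (off μ a + i) (off μ b + j) r =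
      ∑ c ∈ Finset.range n, ∑ q1 ∈ Finset.range (μ c), ∑ q2 ∈ Finset.range (μ c),
        ∑ e1 ∈ Finset.range (r + 1), ∑ e2 ∈ Finset.range (r + 1 - e1),
          F a c i q1 e1 * D c q1 q2 e2 * E c b q2 j (r - e1 - e2)

section Aux
open Finset PowerSeries

theorem off_zero (μ : ℕ → ℕ) : off μ 0 = 0 := by simp [off]
theorem off_succ (μ : ℕ → ℕ) (a : ℕ) : off μ (a + 1) = off μ a + μ a := Finset.sum_range_succ _ _
theorem off_mono (μ : ℕ → ℕ) {a b : ℕ} (h : a ≤ b) : off μ a ≤ off μ b :=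
  Finset.sum_le_sum_of_subset (Finset.range_subset_range.2 h)

open Classical in
/-- block index of a position -/
def blkIdx (μ : ℕ → ℕ) (i : ℕ) : ℕ :=
  if h : ∃ a, i < off μ (a + 1) then Nat.find h else 0

theorem blkIdx_off (μ : ℕ → ℕ) {a q : ℕ} (hq : q < μ a) :
    blkIdx μ (off μ a + q) = a := by
  have hex : ∃ b, off μ a + q < off μ (b + 1) := ⟨a, by rw [off_succ]; omega⟩
  classical
  rw [blkIdx, dif_pos hex, Nat.find_eq_iff]
  refine ⟨by rw [off_succ]; omega, ?_⟩
  intro b hb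
  have : off μ (b + 1) ≤ off μ a := off_mono μ hb
  omega

theorem blkIdx_spec (μ : ℕ → ℕ) {n i : ℕ} (hi : i < off μ n) :
    blkIdx μ i < n ∧ off μ (blkIdx μ i) ≤ i ∧ i - off μ (blkIdx μ i) < μ (blkIdx μ i) := by
  have hn : n ≠ 0 := by rintro rfl; simp [off_zero] at hi
  obtain ⟨m, rfl⟩ := Nat.exists_eq_succ_of_ne_zero hn
  have hex : ∃ a, i < off μ (a + 1) := ⟨m, hi⟩
  have hb : blkIdx μ i = Nat.find hex := by classical rw [blkIdx, dif_pos hex]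
  have h1 : i < off μ (Nat.find hex + 1) := Nat.find_spec hex
  have hle : Nat.find hex ≤ m := Nat.find_le hi
  have hge : off μ (Nat.find hex) ≤ i := by
    rcases Nat.eq_zero_or_pos (Nat.find hex) with h0 | hpos
    · rw [h0, off_zero]; omega
    · have h2 := Nat.find_min hex (Nat.sub_lt hpos one_pos)
      push_neg at h2
      calc off μ (Nat.find hex) = off μ ((Nat.find hex - 1) + 1) := by congr 1; omega
        _ ≤ i := h2
  rw [hb]
  rw [off_succ] at h1
  exact ⟨by omega, hge, by omega⟩

theorem sum_off {M : Type*} [AddCommMonoid M] (μ : ℕ → ℕ) (m : ℕ) (f : ℕ → M) :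
    ∑ g ∈ range (off μ m), f g = ∑ c ∈ range m, ∑ q ∈ range (μ c), f (off μ c + q) := by
  induction m with
  | zero => simp [off_zero]
  | succ m ih => rw [off_succ, Finset.sum_range_add, ih, Finset.sum_range_succ]

theorem off_rev_total (μ : ℕ → ℕ) (n : ℕ) : off (fun b => μ (n - 1 - b)) n = off μ n :=
  Finset.sum_range_reflect μ n

theorem off_rev_add (μ : ℕ → ℕ) {n a : ℕ} (ha : a < n) :
    off μ (a + 1) + off (fun b => μ (n - 1 - b)) (n - 1 - a) = off μ n := by
  have h : off (fun b => μ (n - 1 - b)) (n - 1 - a) = ∑ c ∈ range (n - 1 - a), μ (a + 1 + c) := by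
    rw [off, ← Finset.sum_range_reflect]
    refine Finset.sum_congr rfl fun c hc => ?_
    rw [mem_range] at hc
    congr 1
    omega
  rw [h, off, off]
  conv_rhs => rw [show n = (a + 1) + (n - 1 - a) by omega, Finset.sum_range_add]

theorem rev_point (μ : ℕ → ℕ) {n a q : ℕ} (ha : a < n) (hq : q < μ a) :
    off μ n - 1 - (off μ a + q) = off (fun b => μ (n - 1 - b)) (n - 1 - a) + (μ a - 1 - q) := by
  have h1 := off_rev_add μ ha
  have h2 := off_succ μ a
  have h3 : off μ (a + 1) ≤ off μ n := off_mono μ ha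
  omega

variable {R : Type*} [Ring R]

theorem coeff_mul' (f g : PowerSeries R) (r : ℕ) :
    coeff r (f * g) = ∑ e ∈ range (r + 1), coeff e f * coeff (r - e) g := by
  rw [coeff_mul, Finset.Nat.sum_antidiagonal_eq_sum_range_succ_mk]

theorem sum_reflect' {M : Type*} [AddCommMonoid M] (f g : ℕ → M) (m : ℕ)
    (h : ∀ e < m, g e = f (m - 1 - e)) : ∑ e ∈ range m, g e = ∑ e ∈ range m, f e := by
  rw [← Finset.sum_range_reflect f m]
  exact Finset.sum_congr rfl fun e he => h e (mem_range.1 he)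

def invC (X : ℕ → R) : ℕ → R
  | 0 => 1
  | (r + 1) => - ∑ e ∈ range (r + 1), X (e + 1) * invC X (r - e)
  decreasing_by omega

def invC' (X : ℕ → R) : ℕ → R
  | 0 => 1
  | (r + 1) => - ∑ e ∈ range (r + 1), invC' X (r - e) * X (e + 1)
  decreasing_by omega

theorem invC_zero (X : ℕ → R) : invC X 0 = 1 := by rw [invC]
theorem invC_succ (X : ℕ → R) (r : ℕ) :
    invC X (r + 1) = - ∑ e ∈ range (r + 1), X (e + 1) * invC X (r - e) := by rw [invC]
theorem invC'_zero (X : ℕ → R) : invC' X 0 = 1 := by rw [invC']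
theorem invC'_succ (X : ℕ → R) (r : ℕ) :
    invC' X (r + 1) = - ∑ e ∈ range (r + 1), invC' X (r - e) * X (e + 1) := by rw [invC']

theorem mul_invC (X : PowerSeries R) (hX : constantCoeff X = 1) :
    X * PowerSeries.mk (invC fun e => coeff e X) = 1 := by
  have h0 : coeff 0 X = 1 := by rw [coeff_zero_eq_constantCoeff_apply, hX]
  ext r
  rw [coeff_mul']
  cases r with
  | zero =>
    rw [Finset.range_one, Finset.sum_singleton, Nat.sub_zero, coeff_mk, invC_zero, mul_one, h0,
      coeff_zero_eq_constantCoeff_apply, map_one]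
  | succ r =>
    rw [Finset.sum_range_succ']
    simp only [coeff_mk, Nat.sub_zero, Nat.add_sub_add_right]
    rw [invC_succ, h0, one_mul, add_neg_cancel]
    simp [PowerSeries.coeff_one]

theorem invC'_mul (X : PowerSeries R) (hX : constantCoeff X = 1) :
    PowerSeries.mk (invC' fun e => coeff e X) * X = 1 := by
  have h0 : coeff 0 X = 1 := by rw [coeff_zero_eq_constantCoeff_apply, hX]
  ext r
  rw [coeff_mul']
  cases r with
  | zero =>
    rw [Finset.range_one, Finset.sum_singleton, Nat.sub_zero, coeff_mk, invC'_zero, one_mul, h0,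
      coeff_zero_eq_constantCoeff_apply, map_one]
  | succ r =>
    rw [Finset.sum_range_succ]
    simp only [coeff_mk]
    rw [Nat.sub_self, h0, mul_one, invC'_succ]
    have hre : ∑ e ∈ range (r + 1), invC' (fun e => coeff e X) e * coeff (r + 1 - e) X
        = ∑ e ∈ range (r + 1), invC' (fun e => coeff e X) (r - e) * coeff (e + 1) X := by
      refine sum_reflect' _ _ _ fun e he => ?_
      rw [show r + 1 - 1 - e = r - e by omega]
      rw [show r - (r - e) = e by omega, show r - e + 1 = r + 1 - e by omega]
    rw [hre, add_neg_cancel]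
    simp [PowerSeries.coeff_one]


theorem exists_inv (X : PowerSeries R) (hX : constantCoeff X = 1) :
    ∃ Z, X * Z = 1 ∧ Z * X = 1 := by
  refine ⟨PowerSeries.mk (invC fun e => coeff e X), mul_invC X hX, ?_⟩
  have h2 := invC'_mul X hX
  have h3 := left_inv_eq_right_inv h2 (mul_invC X hX)
  rw [← h3]
  exact h2

theorem cc_right_inv {X Z : PowerSeries R} (hXZ : X * Z = 1)
    (hX : constantCoeff X = 1) : constantCoeff Z = 1 := by
  have h := congrArg constantCoeff hXZ
  rw [map_mul, map_one, hX, one_mul] at h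
  exact h

theorem coeff_inv_mem (S : Subring R) {X Z : PowerSeries R}
    (hXZ : X * Z = 1) (hX0 : constantCoeff X = 1)
    (hX : ∀ r, coeff r X ∈ S) : ∀ r, coeff r Z ∈ S := by
  intro r
  induction r using Nat.strong_induction_on with
  | _ r ih =>
    have h := congrArg (coeff r) hXZ
    rw [coeff_mul'] at h
    have h0 : coeff 0 X = 1 := by rw [coeff_zero_eq_constantCoeff_apply, hX0]
    cases r with
    | zero =>
      rw [Finset.range_one, Finset.sum_singleton, Nat.sub_zero, h0, one_mul,
        PowerSeries.coeff_one, if_pos rfl] at h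
      rw [h]
      exact S.one_mem
    | succ r =>
      rw [Finset.sum_range_succ', Nat.sub_zero, h0, one_mul] at h
      have hz : coeff (r + 1) Z
          = coeff (r + 1) (1 : PowerSeries R)
            - ∑ e ∈ range (r + 1), coeff (e + 1) X * coeff (r + 1 - (e + 1)) Z :=
        eq_sub_of_add_eq' h
      rw [hz, PowerSeries.coeff_one, if_neg (by omega), zero_sub]
      exact S.neg_mem (S.sum_mem fun e he => S.mul_mem (hX _) (ih _ (by omega)))


/-! ### Matrix power series layer -/

variable {A : Type*} [Ring A] {d : ℕ}

abbrev MS (A : Type*) [Ring A] (d : ℕ) := PowerSeries (Matrix (Fin d) (Fin d) A)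

def toPS (d : ℕ) (X : ℕ → ℕ → ℕ → A) : MS A d :=
  PowerSeries.mk fun r => Matrix.of fun i j => X (i : ℕ) (j : ℕ) r

theorem coeff_toPS (X : ℕ → ℕ → ℕ → A) (r : ℕ) (i j : Fin d) :
    coeff r (toPS d X) i j = X (i : ℕ) (j : ℕ) r := by
  rw [toPS, coeff_mk]; rfl

theorem coeff_mul_entry (X Y : MS A d) (r : ℕ) (i j : Fin d) :
    coeff r (X * Y) i j
      = ∑ e ∈ range (r + 1), ∑ g : Fin d, coeff e X i g * coeff (r - e) Y g j := by
  have h2 := congrArg (fun M : Matrix (Fin d) (Fin d) A => M i j) (coeff_mul' X Y r)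
  beta_reduce at h2
  rw [h2, Matrix.sum_apply]
  exact Finset.sum_congr rfl fun e _ => Matrix.mul_apply

theorem coeff_one_entry (r : ℕ) (i j : Fin d) :
    coeff r (1 : MS A d) i j = if i = j ∧ r = 0 then 1 else 0 := by
  rw [PowerSeries.coeff_one]
  by_cases hr : r = 0
  · subst hr; simp [Matrix.one_apply]
  · simp [hr]

theorem coeff_mul_single (X Y : MS A d) (r : ℕ) (i j : Fin d) (e₀ : ℕ) (g₀ : Fin d)
    (he₀ : e₀ ≤ r) (c : A)
    (h : ∀ e (g : Fin d), e ≤ r →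
      coeff e X i g * coeff (r - e) Y g j = if g = g₀ ∧ e = e₀ then c else 0) :
    coeff r (X * Y) i j = c := by
  rw [coeff_mul_entry]
  rw [Finset.sum_congr rfl fun e he => Finset.sum_congr rfl fun g _ =>
      h e g (Nat.lt_succ_iff.mp (mem_range.1 he))]
  have hg : ∀ e : ℕ, (∑ g : Fin d, if g = g₀ ∧ e = e₀ then c else 0)
      = if e = e₀ then c else 0 := by
    intro e
    by_cases he : e = e₀
    · subst he; simp
    · simp [he]
  rw [Finset.sum_congr rfl fun e _ => hg e]
  rw [Finset.sum_ite_eq' (range (r + 1)) e₀ (fun _ => c)]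
  rw [if_pos (mem_range.2 (by omega))]

def relSub (β : Fin d → ℕ) (rel : ℕ → ℕ → Prop) (hrefl : ∀ x, rel x x)
    (htrans : ∀ {x y z}, rel x y → rel y z → rel x z) :
    Subring (Matrix (Fin d) (Fin d) A) where
  carrier := {M | ∀ i j, ¬ rel (β i) (β j) → M i j = 0}
  zero_mem' := fun i j _ => rfl
  one_mem' := by
    intro i j h
    refine Matrix.one_apply_ne fun hij => ?_
    exact h (by rw [hij]; exact hrefl _)
  add_mem' := by
    intro a b ha hb i j h
    show a i j + b i j = 0
    rw [ha i j h, hb i j h, add_zero]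
  neg_mem' := by
    intro a ha i j h
    show -a i j = 0
    rw [ha i j h, neg_zero]
  mul_mem' := by
    intro a b ha hb i j h
    rw [Matrix.mul_apply]
    refine Finset.sum_eq_zero fun g _ => ?_
    by_cases hg : rel (β i) (β g)
    · rw [hb g j fun hgj => h (htrans hg hgj), mul_zero]
    · rw [ha i g hg, zero_mul]

theorem mem_relSub {β : Fin d → ℕ} {rel : ℕ → ℕ → Prop} {h1 : ∀ x, rel x x}
    {h2 : ∀ {x y z}, rel x y → rel y z → rel x z} {M : Matrix (Fin d) (Fin d) A} :
    M ∈ relSub β rel h1 h2 ↔ ∀ i j, ¬ rel (β i) (β j) → M i j = 0 := Iff.rfl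

def lwS (β : Fin d → ℕ) : Subring (Matrix (Fin d) (Fin d) A) :=
  relSub β (fun x y => y ≤ x) (fun _ => le_rfl) (fun h1 h2 => le_trans h2 h1)
def upS (β : Fin d → ℕ) : Subring (Matrix (Fin d) (Fin d) A) :=
  relSub β (fun x y => x ≤ y) (fun _ => le_rfl) (fun h1 h2 => le_trans h1 h2)
def dgS (β : Fin d → ℕ) : Subring (Matrix (Fin d) (Fin d) A) :=
  relSub β (fun x y => x = y) (fun _ => rfl) (fun h1 h2 => h1.trans h2)

def IsLw (β : Fin d → ℕ) (X : MS A d) : Prop := ∀ r, coeff r X ∈ lwS (A := A) β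
def IsUp (β : Fin d → ℕ) (X : MS A d) : Prop := ∀ r, coeff r X ∈ upS (A := A) β
def IsDg (β : Fin d → ℕ) (X : MS A d) : Prop := ∀ r, coeff r X ∈ dgS (A := A) β
def IsUni (β : Fin d → ℕ) (X : MS A d) : Prop :=
  ∀ r (i j : Fin d), β i = β j → coeff r X i j = if i = j ∧ r = 0 then 1 else 0

theorem IsLw.entry {β : Fin d → ℕ} {X : MS A d} (h : IsLw β X) {i j : Fin d}
    (hij : β i < β j) (r : ℕ) : coeff r X i j = 0 :=
  mem_relSub.1 (h r) i j (by omega)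

theorem IsUp.entry {β : Fin d → ℕ} {X : MS A d} (h : IsUp β X) {i j : Fin d}
    (hij : β j < β i) (r : ℕ) : coeff r X i j = 0 :=
  mem_relSub.1 (h r) i j (by omega)

theorem IsDg.entry {β : Fin d → ℕ} {X : MS A d} (h : IsDg β X) {i j : Fin d}
    (hij : β i ≠ β j) (r : ℕ) : coeff r X i j = 0 :=
  mem_relSub.1 (h r) i j hij

theorem IsDg.isLw {β : Fin d → ℕ} {X : MS A d} (h : IsDg β X) : IsLw β X :=
  fun r => mem_relSub.2 fun i j hij => h.entry (by omega) r

theorem IsDg.isUp {β : Fin d → ℕ} {X : MS A d} (h : IsDg β X) : IsUp β X :=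
  fun r => mem_relSub.2 fun i j hij => h.entry (by omega) r

theorem mul_mem_S (S : Subring (Matrix (Fin d) (Fin d) A)) {X Y : MS A d}
    (hX : ∀ r, coeff r X ∈ S) (hY : ∀ r, coeff r Y ∈ S) :
    ∀ r, coeff r (X * Y) ∈ S := by
  intro r
  rw [coeff_mul']
  exact S.sum_mem fun e _ => S.mul_mem (hX e) (hY (r - e))

theorem collapse_lw (β : Fin d → ℕ) {X Y : MS A d} (hXl : IsLw β X) (hXu : IsUni β X)
    (hYl : IsLw β Y) (r : ℕ) {i j : Fin d} (hij : β i = β j) :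
    coeff r (X * Y) i j = coeff r Y i j := by
  refine coeff_mul_single X Y r i j 0 i (by omega) _ ?_
  intro e g he
  rcases lt_trichotomy (β g) (β i) with h | h | h
  · rw [hYl.entry (show β g < β j by omega) (r - e), mul_zero, if_neg]
    rintro ⟨rfl, -⟩; omega
  · rw [hXu e i g h.symm]
    by_cases hc : i = g ∧ e = 0
    · rcases hc with ⟨rfl, rfl⟩; simp
    · rw [if_neg hc, zero_mul, if_neg]
      intro hc2; exact hc ⟨hc2.1.symm, hc2.2⟩
  · rw [hXl.entry h e, zero_mul, if_neg]
    rintro ⟨rfl, -⟩; omega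

theorem collapse_up (β : Fin d → ℕ) {X Y : MS A d} (hXup : IsUp β X) (hXu : IsUni β X)
    (hYu : IsUp β Y) (r : ℕ) {i j : Fin d} (hij : β i = β j) :
    coeff r (X * Y) i j = coeff r Y i j := by
  refine coeff_mul_single X Y r i j 0 i (by omega) _ ?_
  intro e g he
  rcases lt_trichotomy (β g) (β i) with h | h | h
  · rw [hXup.entry h e, zero_mul, if_neg]
    rintro ⟨rfl, -⟩; omega
  · rw [hXu e i g h.symm]
    by_cases hc : i = g ∧ e = 0
    · rcases hc with ⟨rfl, rfl⟩; simp
    · rw [if_neg hc, zero_mul, if_neg]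
      intro hc2; exact hc ⟨hc2.1.symm, hc2.2⟩
  · rw [hYu.entry (show β j < β g by omega) (r - e), mul_zero, if_neg]
    rintro ⟨rfl, -⟩; omega

theorem inv_uni_lw (β : Fin d → ℕ) {X Y : MS A d} (hXY : X * Y = 1) (hXl : IsLw β X)
    (hXu : IsUni β X) (hYl : IsLw β Y) : IsUni β Y := by
  intro r i j hij
  have h := collapse_lw β hXl hXu hYl r hij
  rw [hXY, coeff_one_entry] at h
  rw [← h]

theorem inv_uni_up (β : Fin d → ℕ) {X Y : MS A d} (hXY : X * Y = 1) (hXup : IsUp β X)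
    (hXu : IsUni β X) (hYu : IsUp β Y) : IsUni β Y := by
  intro r i j hij
  have h := collapse_up β hXup hXu hYu r hij
  rw [hXY, coeff_one_entry] at h
  rw [← h]

theorem inv_adj {X Y : MS A d} (hXY : X * Y = 1) {i j : Fin d} (hij : i ≠ j)
    (hker : ∀ e1 e2 (g : Fin d), g ≠ j →
      coeff (R := Matrix (Fin d) (Fin d) A) e1 (X - 1) i g
        * coeff (R := Matrix (Fin d) (Fin d) A) e2 Y g j = 0)
    (hYd : ∀ e, coeff (R := Matrix (Fin d) (Fin d) A) e Y j j = if e = 0 then 1 else 0)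
    (r : ℕ) :
    coeff (R := Matrix (Fin d) (Fin d) A) r Y i j
      = - coeff (R := Matrix (Fin d) (Fin d) A) r X i j := by
  have h1 : (X - 1) * Y = 1 - Y := by rw [sub_mul, one_mul, hXY]
  have hY : Y = 1 - (X - 1) * Y := by rw [h1, sub_sub_cancel]
  have hc : coeff (R := Matrix (Fin d) (Fin d) A) r ((X - 1) * Y) i j
      = coeff (R := Matrix (Fin d) (Fin d) A) r (X - 1) i j := by
    refine coeff_mul_single _ _ r i j r j le_rfl _ ?_
    intro e g he
    by_cases hg : g = j
    · subst hg
      rw [hYd (r - e)]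
      by_cases her : e = r
      · subst her; rw [Nat.sub_self]; simp
      · rw [if_neg (by omega), mul_zero, if_neg (by tauto)]
    · rw [hker e (r - e) g hg, if_neg (by tauto)]
  calc coeff (R := Matrix (Fin d) (Fin d) A) r Y i j
      = coeff (R := Matrix (Fin d) (Fin d) A) r (1 - (X - 1) * Y) i j := by rw [← hY]
    _ = coeff (R := Matrix (Fin d) (Fin d) A) r (1 : MS A d) i j
        - coeff (R := Matrix (Fin d) (Fin d) A) r ((X - 1) * Y) i j := by
        rw [map_sub, Matrix.sub_apply]
    _ = - coeff (R := Matrix (Fin d) (Fin d) A) r X i j := by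
        rw [hc, coeff_one_entry, if_neg (show ¬(i = j ∧ r = 0) by tauto), map_sub,
          Matrix.sub_apply, coeff_one_entry, if_neg (show ¬(i = j ∧ r = 0) by tauto),
          sub_zero, zero_sub]

theorem gauss_unique (β : Fin d → ℕ) {F1 D1 E1 F2 D2 E2 : MS A d}
    (hF1l : IsLw β F1) (hF1u : IsUni β F1)
    (hF2l : IsLw β F2) (hF2u : IsUni β F2) (hF20 : constantCoeff F2 = 1)
    (hD1 : IsDg β D1) (hD10 : constantCoeff D1 = 1)
    (hD2 : IsDg β D2) (hD20 : constantCoeff D2 = 1)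
    (hE1up : IsUp β E1) (hE1uni : IsUni β E1) (hE10 : constantCoeff E1 = 1)
    (hE2up : IsUp β E2) (hE2uni : IsUni β E2)
    (heq : F1 * (D1 * E1) = F2 * (D2 * E2)) :
    F1 = F2 ∧ D1 = D2 ∧ E1 = E2 := by
  obtain ⟨F2', hF2r, hF2li⟩ := exists_inv F2 hF20
  obtain ⟨E1', hE1r, hE1li⟩ := exists_inv E1 hE10
  obtain ⟨D1', hD1r, hD1li⟩ := exists_inv D1 hD10
  obtain ⟨D2', hD2r, hD2li⟩ := exists_inv D2 hD20
  have hF2'l : IsLw β F2' := coeff_inv_mem (lwS (A := A) β) hF2r hF20 hF2l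
  have hF2'u : IsUni β F2' := inv_uni_lw β hF2r hF2l hF2u hF2'l
  have hE1'up : IsUp β E1' := coeff_inv_mem (upS (A := A) β) hE1r hE10 hE1up
  have hE1'uni : IsUni β E1' := inv_uni_up β hE1r hE1up hE1uni hE1'up
  have hD2'dg : IsDg β D2' := coeff_inv_mem (dgS (A := A) β) hD2r hD20 hD2
  have hLl : IsLw β (F2' * F1) := mul_mem_S (lwS β) hF2'l hF1l
  have hLu : IsUni β (F2' * F1) := fun r i j hij => by
    rw [collapse_lw β hF2'l hF2'u hF1l r hij]; exact hF1u r i j hij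
  have hLD : (F2' * F1) * D1 = D2 * (E2 * E1') := by
    have step1 : (F2' * F1) * D1 = F2' * (F1 * (D1 * E1) * E1') := by
      rw [show F1 * (D1 * E1) * E1' = F1 * (D1 * (E1 * E1')) by simp only [mul_assoc],
        hE1r, mul_one, mul_assoc]
    have step3 : F2' * (F2 * (D2 * E2) * E1') = D2 * (E2 * E1') := by
      rw [show F2' * (F2 * (D2 * E2) * E1') = (F2' * F2) * (D2 * (E2 * E1')) by
        simp only [mul_assoc], hF2li, one_mul]
    rw [step1, heq, step3]
  have hLD1 : (F2' * F1) * D1 = D1 := by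
    have hmLw : IsLw β ((F2' * F1) * D1) := mul_mem_S (lwS β) hLl hD1.isLw
    have hmUp : IsUp β (D2 * (E2 * E1')) :=
      mul_mem_S (upS β) hD2.isUp (mul_mem_S (upS β) hE2up hE1'up)
    apply PowerSeries.ext
    intro r
    apply Matrix.ext
    intro i j
    rcases lt_trichotomy (β i) (β j) with h | h | h
    · rw [hmLw.entry h r, hD1.entry (by omega) r]
    · rw [collapse_lw β hLl hLu hD1.isLw r h]
    · rw [hLD, hmUp.entry h r, hD1.entry (by omega) r]
  have hL1 : F2' * F1 = 1 := by
    calc F2' * F1 = (F2' * F1) * (D1 * D1') := by rw [hD1r, mul_one]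
      _ = ((F2' * F1) * D1) * D1' := by simp only [mul_assoc]
      _ = D1 * D1' := by rw [hLD1]
      _ = 1 := hD1r
  have hF : F1 = F2 := by
    calc F1 = (F2 * F2') * F1 := by rw [hF2r, one_mul]
      _ = F2 * (F2' * F1) := by simp only [mul_assoc]
      _ = F2 := by rw [hL1, mul_one]
  have hDE : D1 * E1 = D2 * E2 := by
    calc D1 * E1 = (F2' * F2) * (D1 * E1) := by rw [hF2li, one_mul]
      _ = F2' * (F2 * (D1 * E1)) := by simp only [mul_assoc]
      _ = F2' * (F1 * (D1 * E1)) := by rw [hF]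
      _ = F2' * (F2 * (D2 * E2)) := by rw [heq]
      _ = (F2' * F2) * (D2 * E2) := by simp only [mul_assoc]
      _ = D2 * E2 := by rw [hF2li, one_mul]
  have hV : D2' * D1 = E2 * E1' := by
    calc D2' * D1 = D2' * (D1 * (E1 * E1')) := by rw [hE1r, mul_one]
      _ = D2' * ((D1 * E1) * E1') := by simp only [mul_assoc]
      _ = D2' * ((D2 * E2) * E1') := by rw [hDE]
      _ = (D2' * D2) * (E2 * E1') := by simp only [mul_assoc]
      _ = E2 * E1' := by rw [hD2li, one_mul]
  have hVdg : IsDg β (D2' * D1) := mul_mem_S (dgS β) hD2'dg hD1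
  have hVuni : IsUni β (E2 * E1') := fun r i j hij => by
    rw [collapse_up β hE2up hE2uni hE1'up r hij]; exact hE1'uni r i j hij
  have hV1 : D2' * D1 = 1 := by
    apply PowerSeries.ext
    intro r
    apply Matrix.ext
    intro i j
    by_cases h : β i = β j
    · rw [hV] at *
      rw [hVuni r i j h, coeff_one_entry]
    · rw [hVdg.entry h r, coeff_one_entry, if_neg (by rintro ⟨rfl, -⟩; exact h rfl)]
  refine ⟨hF, ?_, ?_⟩
  · calc D1 = (D2 * D2') * D1 := by rw [hD2r, one_mul]
      _ = D2 * (D2' * D1) := by simp only [mul_assoc]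
      _ = D2 := by rw [hV1, mul_one]
  · have hV1' : E2 * E1' = 1 := by rw [← hV, hV1]
    symm
    calc E2 = E2 * (E1' * E1) := by rw [hE1li, mul_one]
      _ = (E2 * E1') * E1 := by simp only [mul_assoc]
      _ = E1 := by rw [hV1', one_mul]


variable [Algebra ℂ A]

/-! ### Gauss structure to matrix power series -/

def asmE (μ : ℕ → ℕ) (B : ℕ → ℕ → ℕ → ℕ → ℕ → A) : ℕ → ℕ → ℕ → A := fun i j r =>
  B (blkIdx μ i) (blkIdx μ j) (i - off μ (blkIdx μ i)) (j - off μ (blkIdx μ j)) r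

def asmD (μ : ℕ → ℕ) (B : ℕ → ℕ → ℕ → ℕ → A) : ℕ → ℕ → ℕ → A := fun i j r =>
  if blkIdx μ i = blkIdx μ j then
    B (blkIdx μ i) (i - off μ (blkIdx μ i)) (j - off μ (blkIdx μ j)) r else 0

abbrev bβ (μ : ℕ → ℕ) (d : ℕ) : Fin d → ℕ := fun i => blkIdx μ (i : ℕ)

variable {n : ℕ} {μ : ℕ → ℕ}

theorem val_decomp (hd : off μ n = d) (i : Fin d) :
    blkIdx μ (i : ℕ) < n ∧ off μ (blkIdx μ (i : ℕ)) ≤ (i : ℕ) ∧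
      (i : ℕ) - off μ (blkIdx μ (i : ℕ)) < μ (blkIdx μ (i : ℕ)) :=
  blkIdx_spec μ (show (i : ℕ) < off μ n by rw [hd]; exact i.isLt)

theorem entry_eq_iff (hd : off μ n = d) {i j : Fin d}
    (hβ : blkIdx μ (i : ℕ) = blkIdx μ (j : ℕ)) :
    i = j ↔ (i : ℕ) - off μ (blkIdx μ (i : ℕ)) = (j : ℕ) - off μ (blkIdx μ (j : ℕ)) := by
  obtain ⟨-, h1, -⟩ := val_decomp hd i
  obtain ⟨-, h2, -⟩ := val_decomp hd j
  have hXY : off μ (blkIdx μ (i : ℕ)) = off μ (blkIdx μ (j : ℕ)) := by rw [hβ]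
  constructor
  · rintro rfl; rfl
  · intro h; apply Fin.ext; omega

theorem asmE_apply (B : ℕ → ℕ → ℕ → ℕ → ℕ → A) {a b q1 q2 : ℕ}
    (h1 : q1 < μ a) (h2 : q2 < μ b) (r : ℕ) :
    asmE μ B (off μ a + q1) (off μ b + q2) r = B a b q1 q2 r := by
  simp only [asmE, blkIdx_off μ h1, blkIdx_off μ h2, Nat.add_sub_cancel_left]

theorem asmD_apply_right (B : ℕ → ℕ → ℕ → ℕ → A) {c q : ℕ} (hq : q < μ c) (m r : ℕ) :
    asmD μ B m (off μ c + q) r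
      = if blkIdx μ m = c then B (blkIdx μ m) (m - off μ (blkIdx μ m)) q r else 0 := by
  simp only [asmD, blkIdx_off μ hq, Nat.add_sub_cancel_left]

theorem asmD_apply_left (B : ℕ → ℕ → ℕ → ℕ → A) {c q : ℕ} (hq : q < μ c) (m r : ℕ) :
    asmD μ B (off μ c + q) m r
      = if c = blkIdx μ m then B c q (m - off μ (blkIdx μ m)) r else 0 := by
  simp only [asmD, blkIdx_off μ hq, Nat.add_sub_cancel_left]

/-- generic: constant coefficient 1 criteria -/
theorem cc_one_of_lw (β : Fin d → ℕ) {X : MS A d} (hl : IsLw β X) (hu : IsUni β X)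
    (hz : ∀ i j : Fin d, β j < β i → coeff 0 X i j = 0) :
    constantCoeff X = 1 := by
  apply Matrix.ext; intro i j
  rw [← coeff_zero_eq_constantCoeff_apply]
  rcases lt_trichotomy (β i) (β j) with h | h | h
  · rw [hl.entry h 0, Matrix.one_apply_ne (fun hij => by subst hij; omega)]
  · rw [hu 0 i j h, Matrix.one_apply]; simp
  · rw [hz i j h, Matrix.one_apply_ne (fun hij => by subst hij; omega)]

theorem cc_one_of_up (β : Fin d → ℕ) {X : MS A d} (hup : IsUp β X) (hu : IsUni β X)
    (hz : ∀ i j : Fin d, β i < β j → coeff 0 X i j = 0) :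
    constantCoeff X = 1 := by
  apply Matrix.ext; intro i j
  rw [← coeff_zero_eq_constantCoeff_apply]
  rcases lt_trichotomy (β i) (β j) with h | h | h
  · rw [hz i j h, Matrix.one_apply_ne (fun hij => by subst hij; omega)]
  · rw [hu 0 i j h, Matrix.one_apply]; simp
  · rw [hup.entry h 0, Matrix.one_apply_ne (fun hij => by subst hij; omega)]

section GaussProps

variable {T : ℕ → ℕ → ℕ → A} (G : Gauss T n μ)

theorem toPS_F_lw : IsLw (bβ μ d) (toPS d (asmE μ G.F)) := by
  intro r
  refine mem_relSub.2 fun i j hij => ?_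
  rw [coeff_toPS]
  simp only [bβ] at hij
  exact G.F_high _ _ _ _ r (by omega)

theorem toPS_E_up : IsUp (bβ μ d) (toPS d (asmE μ G.E)) := by
  intro r
  refine mem_relSub.2 fun i j hij => ?_
  rw [coeff_toPS]
  simp only [bβ] at hij
  exact G.E_low _ _ _ _ r (by omega)

theorem toPS_F_uni (hd : off μ n = d) : IsUni (bβ μ d) (toPS d (asmE μ G.F)) := by
  intro r i j hβ
  rw [coeff_toPS]
  show G.F _ _ _ _ r = _
  have hβ' : blkIdx μ (j : ℕ) = blkIdx μ (i : ℕ) := hβ.symm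
  rw [hβ', G.F_diag]
  refine if_congr ?_ rfl rfl
  obtain ⟨-, h1, -⟩ := val_decomp hd i
  obtain ⟨-, h2, -⟩ := val_decomp hd j
  have hoff2 : off μ (blkIdx μ (j : ℕ)) = off μ (blkIdx μ (i : ℕ)) := by rw [hβ']
  constructor
  · rintro ⟨hq, hr⟩; exact ⟨Fin.ext (by omega), hr⟩
  · rintro ⟨rfl, hr⟩; exact ⟨rfl, hr⟩

theorem toPS_E_uni (hd : off μ n = d) : IsUni (bβ μ d) (toPS d (asmE μ G.E)) := by
  intro r i j hβ
  rw [coeff_toPS]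
  show G.E _ _ _ _ r = _
  have hβ' : blkIdx μ (j : ℕ) = blkIdx μ (i : ℕ) := hβ.symm
  rw [hβ', G.E_diag]
  refine if_congr ?_ rfl rfl
  obtain ⟨-, h1, -⟩ := val_decomp hd i
  obtain ⟨-, h2, -⟩ := val_decomp hd j
  have hoff2 : off μ (blkIdx μ (j : ℕ)) = off μ (blkIdx μ (i : ℕ)) := by rw [hβ']
  constructor
  · rintro ⟨hq, hr⟩; exact ⟨Fin.ext (by omega), hr⟩
  · rintro ⟨rfl, hr⟩; exact ⟨rfl, hr⟩

theorem toPS_F_cc (hd : off μ n = d) : constantCoeff (toPS d (asmE μ G.F)) = 1 := by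
  refine cc_one_of_lw (bβ μ d) (toPS_F_lw G) (toPS_F_uni G hd) fun i j h => ?_
  rw [coeff_toPS]
  simp only [bβ] at h
  exact G.F_zero _ _ _ _ (by omega)

theorem toPS_E_cc (hd : off μ n = d) : constantCoeff (toPS d (asmE μ G.E)) = 1 := by
  refine cc_one_of_up (bβ μ d) (toPS_E_up G) (toPS_E_uni G hd) fun i j h => ?_
  rw [coeff_toPS]
  simp only [bβ] at h
  exact G.E_zero _ _ _ _ (by omega)

theorem toPS_D_dg (B : ℕ → ℕ → ℕ → ℕ → A) : IsDg (bβ μ d) (toPS d (asmD μ B)) := by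
  intro r
  refine mem_relSub.2 fun i j hij => ?_
  rw [coeff_toPS]
  exact if_neg hij

theorem toPS_D_cc (hd : off μ n = d) : constantCoeff (toPS d (asmD μ G.D)) = 1 := by
  apply Matrix.ext; intro i j
  rw [← coeff_zero_eq_constantCoeff_apply, coeff_toPS]
  show (if _ then G.D _ _ _ 0 else 0) = _
  by_cases h : blkIdx μ (i : ℕ) = blkIdx μ (j : ℕ)
  · rw [if_pos h, G.D_zero, Matrix.one_apply]
    refine if_congr ?_ rfl rfl
    exact (entry_eq_iff hd h).symm
  · rw [if_neg h, Matrix.one_apply_ne (fun hij => h (by rw [hij]))]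

end GaussProps


theorem asmE_apply_right (B : ℕ → ℕ → ℕ → ℕ → ℕ → A) {c q : ℕ} (hq : q < μ c) (m r : ℕ) :
    asmE μ B m (off μ c + q) r = B (blkIdx μ m) c (m - off μ (blkIdx μ m)) q r := by
  simp only [asmE, blkIdx_off μ hq, Nat.add_sub_cancel_left]

theorem asmE_apply_left (B : ℕ → ℕ → ℕ → ℕ → ℕ → A) {c q : ℕ} (hq : q < μ c) (m r : ℕ) :
    asmE μ B (off μ c + q) m r = B c (blkIdx μ m) q (m - off μ (blkIdx μ m)) r := by
  simp only [asmE, blkIdx_off μ hq, Nat.add_sub_cancel_left]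

theorem fin_sum_blocks {M : Type*} [AddCommMonoid M] (hd : off μ n = d) (f : ℕ → M) :
    ∑ g : Fin d, f (g : ℕ) = ∑ c ∈ range n, ∑ q ∈ range (μ c), f (off μ c + q) := by
  rw [Fin.sum_univ_eq_sum_range, ← hd, sum_off]

theorem coeff_asmD_mul_toPS (hd : off μ n = d) (B : ℕ → ℕ → ℕ → ℕ → A) (C : ℕ → ℕ → ℕ → A)
    (s : ℕ) (g j : Fin d) :
    coeff s (toPS d (asmD μ B) * toPS d C) g j
      = ∑ e ∈ range (s + 1), ∑ q ∈ range (μ (blkIdx μ (g : ℕ))),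
          B (blkIdx μ (g : ℕ)) ((g : ℕ) - off μ (blkIdx μ (g : ℕ))) q e
            * C (off μ (blkIdx μ (g : ℕ)) + q) (j : ℕ) (s - e) := by
  rw [coeff_mul_entry]
  refine Finset.sum_congr rfl fun e _ => ?_
  have h1 : (∑ g2 : Fin d, coeff e (toPS d (asmD μ B)) g g2
        * coeff (s - e) (toPS d C) g2 j)
      = ∑ g2 : Fin d, asmD μ B (g : ℕ) ((g2 : ℕ)) e * C ((g2 : ℕ)) (j : ℕ) (s - e) :=
    Finset.sum_congr rfl fun g2 _ => by rw [coeff_toPS, coeff_toPS]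
  rw [h1, fin_sum_blocks hd (f := fun m => asmD μ B (g : ℕ) m e * C m (j : ℕ) (s - e))]
  obtain ⟨hgn, -, -⟩ := val_decomp hd g
  rw [Finset.sum_eq_single_of_mem (blkIdx μ (g : ℕ)) (Finset.mem_range.2 hgn)
    (fun c hc hne => Finset.sum_eq_zero fun q hq => by
      rw [asmD_apply_right B (Finset.mem_range.1 hq), if_neg (fun h => hne h.symm), zero_mul])]
  exact Finset.sum_congr rfl fun q hq => by
    rw [asmD_apply_right B (Finset.mem_range.1 hq), if_pos rfl]

theorem asmD_mul_asmD_eq_one (hd : off μ n = d) (B1 B2 : ℕ → ℕ → ℕ → ℕ → A)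
    (hBB : ∀ a i j r, a < n → i < μ a → j < μ a →
      ∑ q ∈ range (μ a), ∑ e ∈ range (r + 1), B1 a i q e * B2 a q j (r - e) =
        if i = j ∧ r = 0 then 1 else 0) :
    toPS d (asmD μ B1) * toPS d (asmD μ B2) = 1 := by
  apply PowerSeries.ext; intro r; apply Matrix.ext; intro i j
  rw [coeff_asmD_mul_toPS hd, coeff_one_entry]
  obtain ⟨hin, hi1, hi2⟩ := val_decomp hd i
  obtain ⟨hjn, hj1, hj2⟩ := val_decomp hd j
  by_cases h : blkIdx μ (i : ℕ) = blkIdx μ (j : ℕ)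
  · have hstep : ∀ e ∈ range (r + 1), ∀ q ∈ range (μ (blkIdx μ (i : ℕ))),
        B1 (blkIdx μ (i : ℕ)) ((i : ℕ) - off μ (blkIdx μ (i : ℕ))) q e
            * asmD μ B2 (off μ (blkIdx μ (i : ℕ)) + q) (j : ℕ) (r - e)
          = B1 (blkIdx μ (i : ℕ)) ((i : ℕ) - off μ (blkIdx μ (i : ℕ))) q e
            * B2 (blkIdx μ (i : ℕ)) q ((j : ℕ) - off μ (blkIdx μ (j : ℕ))) (r - e) := by
      intro e _ q hq
      rw [asmD_apply_left B2 (Finset.mem_range.1 hq), if_pos h]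
    rw [Finset.sum_congr rfl fun e he => Finset.sum_congr rfl fun q hq => hstep e he q hq,
      Finset.sum_comm,
      hBB _ _ _ r hin hi2 (by rw [h]; exact hj2)]
    refine if_congr ?_ rfl rfl
    rw [← entry_eq_iff hd h]
  · rw [if_neg (by rintro ⟨rfl, -⟩; exact h rfl)]
    refine Finset.sum_eq_zero fun e _ => Finset.sum_eq_zero fun q hq => ?_
    rw [asmD_apply_left B2 (Finset.mem_range.1 hq), if_neg h, mul_zero]

theorem gauss_eq {T : ℕ → ℕ → ℕ → A} (G : Gauss T n μ) (hd : off μ n = d) :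
    toPS d T = toPS d (asmE μ G.F) * (toPS d (asmD μ G.D) * toPS d (asmE μ G.E)) := by
  apply PowerSeries.ext; intro r; apply Matrix.ext; intro i j
  obtain ⟨ha, hai, hqi⟩ := val_decomp hd i
  obtain ⟨hb, haj, hqj⟩ := val_decomp hd j
  rw [coeff_toPS]
  rw [show T (i : ℕ) (j : ℕ) r
      = T (off μ (blkIdx μ (i : ℕ)) + ((i : ℕ) - off μ (blkIdx μ (i : ℕ))))
          (off μ (blkIdx μ (j : ℕ)) + ((j : ℕ) - off μ (blkIdx μ (j : ℕ)))) r by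
    congr 2 <;> omega]
  rw [G.decomp _ _ _ _ r ha hb hqi hqj]
  rw [coeff_mul_entry]
  -- normalize the right-hand side
  have hR : ∀ e1 ∈ range (r + 1),
      (∑ g : Fin d, coeff e1 (toPS d (asmE μ G.F)) i g
          * coeff (r - e1)
              (toPS d (asmD μ G.D) * toPS d (asmE μ G.E)) g j)
      = ∑ c ∈ range n, ∑ q1 ∈ range (μ c),
          G.F (blkIdx μ (i : ℕ)) c ((i : ℕ) - off μ (blkIdx μ (i : ℕ))) q1 e1
            * ∑ e2 ∈ range (r - e1 + 1), ∑ q2 ∈ range (μ c),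
                G.D c q1 q2 e2
                  * G.E c (blkIdx μ (j : ℕ)) q2 ((j : ℕ) - off μ (blkIdx μ (j : ℕ)))
                      (r - e1 - e2) := by
    intro e1 _
    have h1 : (∑ g : Fin d, coeff e1 (toPS d (asmE μ G.F)) i g
          * coeff (r - e1)
              (toPS d (asmD μ G.D) * toPS d (asmE μ G.E)) g j)
        = ∑ g : Fin d, asmE μ G.F (i : ℕ) ((g : ℕ)) e1
            * ∑ e2 ∈ range (r - e1 + 1), ∑ q2 ∈ range (μ (blkIdx μ (g : ℕ))),
                G.D (blkIdx μ (g : ℕ)) ((g : ℕ) - off μ (blkIdx μ (g : ℕ))) q2 e2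
                  * asmE μ G.E (off μ (blkIdx μ (g : ℕ)) + q2) (j : ℕ) (r - e1 - e2) :=
      Finset.sum_congr rfl fun g _ => by
        rw [coeff_toPS, coeff_asmD_mul_toPS hd]
    rw [h1, fin_sum_blocks hd (f := fun m => asmE μ G.F (i : ℕ) m e1
      * ∑ e2 ∈ range (r - e1 + 1), ∑ q2 ∈ range (μ (blkIdx μ m)),
          G.D (blkIdx μ m) (m - off μ (blkIdx μ m)) q2 e2
            * asmE μ G.E (off μ (blkIdx μ m) + q2) (j : ℕ) (r - e1 - e2))]
    refine Finset.sum_congr rfl fun c hc => Finset.sum_congr rfl fun q1 hq1 => ?_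
    rw [mem_range] at hq1
    rw [asmE_apply_right G.F hq1, blkIdx_off μ hq1, Nat.add_sub_cancel_left]
    congr 1
    refine Finset.sum_congr rfl fun e2 _ => Finset.sum_congr rfl fun q2 hq2 => ?_
    rw [mem_range] at hq2
    rw [asmE_apply_left G.E hq2]
  rw [Finset.sum_congr rfl hR]
  -- now reorder the left-hand side
  calc ∑ c ∈ range n, ∑ q1 ∈ range (μ c), ∑ q2 ∈ range (μ c), ∑ e1 ∈ range (r + 1),
        ∑ e2 ∈ range (r + 1 - e1),
          G.F (blkIdx μ (i : ℕ)) c ((i : ℕ) - off μ (blkIdx μ (i : ℕ))) q1 e1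
            * G.D c q1 q2 e2
            * G.E c (blkIdx μ (j : ℕ)) q2 ((j : ℕ) - off μ (blkIdx μ (j : ℕ))) (r - e1 - e2)
      = ∑ c ∈ range n, ∑ q1 ∈ range (μ c), ∑ e1 ∈ range (r + 1), ∑ q2 ∈ range (μ c),
        ∑ e2 ∈ range (r + 1 - e1), _ := by
        exact Finset.sum_congr rfl fun c _ => Finset.sum_congr rfl fun q1 _ => Finset.sum_comm
    _ = ∑ c ∈ range n, ∑ q1 ∈ range (μ c), ∑ e1 ∈ range (r + 1), ∑ e2 ∈ range (r + 1 - e1),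
        ∑ q2 ∈ range (μ c), _ := by
        exact Finset.sum_congr rfl fun c _ => Finset.sum_congr rfl fun q1 _ =>
          Finset.sum_congr rfl fun e1 _ => Finset.sum_comm
    _ = ∑ c ∈ range n, ∑ e1 ∈ range (r + 1), ∑ q1 ∈ range (μ c), ∑ e2 ∈ range (r + 1 - e1),
        ∑ q2 ∈ range (μ c), _ := by
        exact Finset.sum_congr rfl fun c _ => Finset.sum_comm
    _ = ∑ e1 ∈ range (r + 1), ∑ c ∈ range n, ∑ q1 ∈ range (μ c), ∑ e2 ∈ range (r + 1 - e1),
        ∑ q2 ∈ range (μ c), _ := Finset.sum_comm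
    _ = ∑ e1 ∈ range (r + 1), ∑ c ∈ range n, ∑ q1 ∈ range (μ c),
          G.F (blkIdx μ (i : ℕ)) c ((i : ℕ) - off μ (blkIdx μ (i : ℕ))) q1 e1
            * ∑ e2 ∈ range (r - e1 + 1), ∑ q2 ∈ range (μ c),
                G.D c q1 q2 e2
                  * G.E c (blkIdx μ (j : ℕ)) q2 ((j : ℕ) - off μ (blkIdx μ (j : ℕ)))
                      (r - e1 - e2) := by
        refine Finset.sum_congr rfl fun e1 he1 => Finset.sum_congr rfl fun c _ =>
          Finset.sum_congr rfl fun q1 _ => ?_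
        rw [mem_range] at he1
        rw [Finset.mul_sum]
        rw [show r + 1 - e1 = r - e1 + 1 by omega]
        refine Finset.sum_congr rfl fun e2 _ => ?_
        rw [Finset.mul_sum]
        exact Finset.sum_congr rfl fun q2 _ => (mul_assoc _ _ _)


/-! ### reversal -/

def revPS {d : ℕ} (X : MS A d) : MS A d :=
  PowerSeries.mk fun r => Matrix.of fun i j => coeff r X (Fin.rev i) (Fin.rev j)

theorem coeff_revPS (X : MS A d) (r : ℕ) (i j : Fin d) :
    coeff r (revPS X) i j
      = coeff r X (Fin.rev i) (Fin.rev j) := by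
  rw [revPS, coeff_mk]; rfl

theorem revPS_mul (X Y : MS A d) : revPS (X * Y) = revPS X * revPS Y := by
  apply PowerSeries.ext; intro r; apply Matrix.ext; intro i j
  rw [coeff_revPS, coeff_mul_entry, coeff_mul_entry]
  refine Finset.sum_congr rfl fun e _ => ?_
  have h2 : (∑ g : Fin d, coeff e (revPS X) i g
        * coeff (r - e) (revPS Y) g j)
      = ∑ g : Fin d, (fun g' => coeff e X (Fin.rev i) g'
          * coeff (r - e) Y g' (Fin.rev j)) (Fin.revPerm g) :=
    Finset.sum_congr rfl fun g _ => by rw [coeff_revPS, coeff_revPS]; rfl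
  rw [h2]
  exact (Equiv.sum_comp (Fin.revPerm) fun g' => coeff e X (Fin.rev i) g'
    * coeff (r - e) Y g' (Fin.rev j)).symm

theorem revPS_one : revPS (1 : MS A d) = 1 := by
  apply PowerSeries.ext; intro r; apply Matrix.ext; intro i j
  rw [coeff_revPS, coeff_one_entry, coeff_one_entry]
  exact if_congr (and_congr Fin.rev_inj Iff.rfl) rfl rfl

theorem cc_revPS {X : MS A d} (h : constantCoeff X = 1) : constantCoeff (revPS X) = 1 := by
  apply Matrix.ext; intro i j
  rw [← coeff_zero_eq_constantCoeff_apply, coeff_revPS, coeff_zero_eq_constantCoeff_apply, h,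
    Matrix.one_apply, Matrix.one_apply]
  exact if_congr Fin.rev_inj rfl rfl

theorem rev_fin (hd : off μ n = d) (i : Fin d) :
    blkIdx (fun b => μ (n - 1 - b)) (i : ℕ)
        = n - 1 - blkIdx μ ((Fin.rev i : Fin d) : ℕ) ∧
      (i : ℕ) - off (fun b => μ (n - 1 - b)) (blkIdx (fun b => μ (n - 1 - b)) (i : ℕ))
        = μ (blkIdx μ ((Fin.rev i : Fin d) : ℕ))
            - 1 - (((Fin.rev i : Fin d) : ℕ) - off μ (blkIdx μ ((Fin.rev i : Fin d) : ℕ))) := by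
  obtain ⟨ha, h1, h2⟩ := val_decomp hd (Fin.rev i)
  have hx : ((Fin.rev i : Fin d) : ℕ)
      = off μ (blkIdx μ ((Fin.rev i : Fin d) : ℕ))
        + (((Fin.rev i : Fin d) : ℕ) - off μ (blkIdx μ ((Fin.rev i : Fin d) : ℕ))) := by omega
  have hrv : ((Fin.rev i : Fin d) : ℕ) = d - ((i : ℕ) + 1) := Fin.val_rev i
  have hid : (i : ℕ) < d := i.isLt
  have hrp := rev_point μ ha h2
  rw [hd] at hrp
  have hival : (i : ℕ) = off (fun b => μ (n - 1 - b)) (n - 1 - blkIdx μ ((Fin.rev i : Fin d) : ℕ))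
      + (μ (blkIdx μ ((Fin.rev i : Fin d) : ℕ))
          - 1 - (((Fin.rev i : Fin d) : ℕ) - off μ (blkIdx μ ((Fin.rev i : Fin d) : ℕ)))) := by
    omega
  have hq : μ (blkIdx μ ((Fin.rev i : Fin d) : ℕ))
        - 1 - (((Fin.rev i : Fin d) : ℕ) - off μ (blkIdx μ ((Fin.rev i : Fin d) : ℕ)))
      < (fun b => μ (n - 1 - b)) (n - 1 - blkIdx μ ((Fin.rev i : Fin d) : ℕ)) := by
    show _ < μ (n - 1 - (n - 1 - blkIdx μ ((Fin.rev i : Fin d) : ℕ)))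
    rw [show n - 1 - (n - 1 - blkIdx μ ((Fin.rev i : Fin d) : ℕ))
        = blkIdx μ ((Fin.rev i : Fin d) : ℕ) by omega]
    omega
  have hblk := blkIdx_off (fun b => μ (n - 1 - b))
    (a := n - 1 - blkIdx μ ((Fin.rev i : Fin d) : ℕ)) hq
  constructor
  · rw [hival, hblk]
  · rw [hival, hblk, Nat.add_sub_cancel_left]

theorem isLw_rev (hd : off μ n = d) {X : MS A d} (h : IsUp (bβ μ d) X) :
    IsLw (bβ (fun b => μ (n - 1 - b)) d) (revPS X) := by
  intro r
  refine mem_relSub.2 fun i j hij => ?_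
  rw [coeff_revPS]
  obtain ⟨hbi, -⟩ := rev_fin hd i
  obtain ⟨hbj, -⟩ := rev_fin hd j
  obtain ⟨hai, -, -⟩ := val_decomp hd (Fin.rev i)
  obtain ⟨haj, -, -⟩ := val_decomp hd (Fin.rev j)
  simp only [bβ] at hij
  exact h.entry (show blkIdx μ ((Fin.rev j : Fin d) : ℕ) < blkIdx μ ((Fin.rev i : Fin d) : ℕ)
    by omega) r

theorem isUp_rev (hd : off μ n = d) {X : MS A d} (h : IsLw (bβ μ d) X) :
    IsUp (bβ (fun b => μ (n - 1 - b)) d) (revPS X) := by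
  intro r
  refine mem_relSub.2 fun i j hij => ?_
  rw [coeff_revPS]
  obtain ⟨hbi, -⟩ := rev_fin hd i
  obtain ⟨hbj, -⟩ := rev_fin hd j
  obtain ⟨hai, -, -⟩ := val_decomp hd (Fin.rev i)
  obtain ⟨haj, -, -⟩ := val_decomp hd (Fin.rev j)
  simp only [bβ] at hij
  exact h.entry (show blkIdx μ ((Fin.rev i : Fin d) : ℕ) < blkIdx μ ((Fin.rev j : Fin d) : ℕ)
    by omega) r

theorem isDg_rev (hd : off μ n = d) {X : MS A d} (h : IsDg (bβ μ d) X) :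
    IsDg (bβ (fun b => μ (n - 1 - b)) d) (revPS X) := by
  intro r
  refine mem_relSub.2 fun i j hij => ?_
  rw [coeff_revPS]
  obtain ⟨hbi, -⟩ := rev_fin hd i
  obtain ⟨hbj, -⟩ := rev_fin hd j
  obtain ⟨hai, -, -⟩ := val_decomp hd (Fin.rev i)
  obtain ⟨haj, -, -⟩ := val_decomp hd (Fin.rev j)
  simp only [bβ] at hij
  exact h.entry (show blkIdx μ ((Fin.rev i : Fin d) : ℕ) ≠ blkIdx μ ((Fin.rev j : Fin d) : ℕ)
    by omega) r

theorem isUni_rev (hd : off μ n = d) {X : MS A d} (h : IsUni (bβ μ d) X) :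
    IsUni (bβ (fun b => μ (n - 1 - b)) d) (revPS X) := by
  intro r i j hij
  rw [coeff_revPS]
  obtain ⟨hbi, -⟩ := rev_fin hd i
  obtain ⟨hbj, -⟩ := rev_fin hd j
  obtain ⟨hai, -, -⟩ := val_decomp hd (Fin.rev i)
  obtain ⟨haj, -, -⟩ := val_decomp hd (Fin.rev j)
  simp only [bβ] at hij
  rw [h r _ _ (show blkIdx μ ((Fin.rev i : Fin d) : ℕ) = blkIdx μ ((Fin.rev j : Fin d) : ℕ)
    by omega)]
  exact if_congr (and_congr Fin.rev_inj Iff.rfl) rfl rfl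

theorem asmD_apply_both (B : ℕ → ℕ → ℕ → ℕ → A) {c q1 q2 : ℕ}
    (h1 : q1 < μ c) (h2 : q2 < μ c) (r : ℕ) :
    asmD μ B (off μ c + q1) (off μ c + q2) r = B c q1 q2 r := by
  simp only [asmD, blkIdx_off μ h1, blkIdx_off μ h2, Nat.add_sub_cancel_left]
  simp

theorem lt_off (hd : off μ n = d) {a q : ℕ} (ha : a < n) (hq : q < μ a) : off μ a + q < d := by
  have h1 := off_succ μ a
  have h2 := off_mono μ (show a + 1 ≤ n by omega)
  omega


theorem rev_finOf (hd : off μ n = d) (hd' : off (fun b => μ (n - 1 - b)) n = d)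
    {a q : ℕ} (ha : a < n) (hq : q < μ a)
    (hna : n - 1 - a < n) (hq' : μ a - 1 - q < (fun b => μ (n - 1 - b)) (n - 1 - a)) :
    Fin.rev (⟨off (fun b => μ (n - 1 - b)) (n - 1 - a) + (μ a - 1 - q),
        lt_off hd' hna hq'⟩ : Fin d)
      = ⟨off μ a + q, lt_off hd ha hq⟩ := by
  apply Fin.ext
  rw [Fin.val_rev]
  show d - ((off (fun b => μ (n - 1 - b)) (n - 1 - a) + (μ a - 1 - q)) + 1) = off μ a + q
  have hrp := rev_point μ ha hq
  rw [hd] at hrp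
  have hlt := lt_off hd ha hq
  have hlt2 := lt_off hd' hna hq'
  omega

theorem main14 {n : ℕ} {μ : ℕ → ℕ}
    (t t' : ℕ → ℕ → ℕ → A)
    (hinv : ∀ i j r : ℕ, i < d → j < d →
      ∑ g ∈ Finset.range d, ∑ e ∈ Finset.range (r + 1), t i g e * t' g j (r - e) =
        if i = j ∧ r = 0 then 1 else 0)
    (hinv' : ∀ i j r : ℕ, i < d → j < d →
      ∑ g ∈ Finset.range d, ∑ e ∈ Finset.range (r + 1), t' i g e * t g j (r - e) =
        if i = j ∧ r = 0 then 1 else 0)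
    (G : Gauss t n μ)
    (G2 : Gauss (fun i j r => t' (d - 1 - i) (d - 1 - j) r) n (fun b => μ (n - 1 - b)))
    (hd : off μ n = d) :
    (∀ a i j r : ℕ, a < n → i < μ a → j < μ a →
      G.D a i j r = G2.D' (n - 1 - a) (μ a - 1 - i) (μ a - 1 - j) r) ∧
    (∀ a h k r : ℕ, a + 1 < n → h < μ a → k < μ (a + 1) →
      G.E a (a + 1) h k r =
        - G2.F (n - 1 - a) (n - 2 - a) (μ a - 1 - h) (μ (a + 1) - 1 - k) r) ∧
    (∀ a h k r : ℕ, a + 1 < n → h < μ a → k < μ (a + 1) →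
      G.F (a + 1) a k h r =
        - G2.E (n - 2 - a) (n - 1 - a) (μ (a + 1) - 1 - k) (μ a - 1 - h) r) := by
  have hd' : off (fun b => μ (n - 1 - b)) n = d := by rw [off_rev_total]; exact hd
  -- T * T' = 1 and T' * T = 1
  have hmul : ∀ (u v : ℕ → ℕ → ℕ → A),
      (∀ i j r : ℕ, i < d → j < d →
        ∑ g ∈ Finset.range d, ∑ e ∈ Finset.range (r + 1), u i g e * v g j (r - e) =
          if i = j ∧ r = 0 then 1 else 0) →
      toPS d u * toPS d v = 1 := by
    intro u v huv
    apply PowerSeries.ext; intro r; apply Matrix.ext; intro i j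
    rw [coeff_mul_entry, coeff_one_entry]
    have hstep : ∀ e ∈ range (r + 1),
        (∑ g : Fin d, coeff e (toPS d u) i g
          * coeff (r - e) (toPS d v) g j)
        = ∑ g ∈ range d, u (i : ℕ) g e * v g (j : ℕ) (r - e) := by
      intro e _
      have h1 : (∑ g : Fin d, coeff e (toPS d u) i g
            * coeff (r - e) (toPS d v) g j)
          = ∑ g : Fin d, (fun m => u (i : ℕ) m e * v m (j : ℕ) (r - e)) ((g : ℕ)) :=
        Finset.sum_congr rfl fun g _ => by rw [coeff_toPS, coeff_toPS]
      rw [h1]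
      exact Fin.sum_univ_eq_sum_range (fun m => u (i : ℕ) m e * v m (j : ℕ) (r - e)) d
    rw [Finset.sum_congr rfl hstep, Finset.sum_comm, huv (i : ℕ) (j : ℕ) r i.isLt j.isLt]
    exact if_congr (and_congr Fin.val_inj Iff.rfl) rfl rfl
  have hTT' : toPS d t * toPS d t' = 1 := hmul t t' hinv
  have hT'T : toPS d t' * toPS d t = 1 := hmul t' t hinv'
  have hG : toPS d t
      = toPS d (asmE μ G.F) * (toPS d (asmD μ G.D) * toPS d (asmE μ G.E)) := gauss_eq G hd
  have hFcc := toPS_F_cc G hd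
  have hDcc := toPS_D_cc G hd
  have hEcc := toPS_E_cc G hd
  obtain ⟨Ft', hFr, hFl⟩ := exists_inv _ hFcc
  obtain ⟨Dt', hDr, hDl⟩ := exists_inv _ hDcc
  obtain ⟨Et', hEr, hEl⟩ := exists_inv _ hEcc
  have hTinv : toPS d t * (Et' * (Dt' * Ft')) = 1 := by
    rw [hG]
    have c1 : toPS d (asmE μ G.E) * (Et' * (Dt' * Ft')) = Dt' * Ft' := by
      rw [← mul_assoc, hEr, one_mul]
    have c2 : toPS d (asmD μ G.D) * (Dt' * Ft') = Ft' := by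
      rw [← mul_assoc, hDr, one_mul]
    calc toPS d (asmE μ G.F) * (toPS d (asmD μ G.D) * toPS d (asmE μ G.E))
          * (Et' * (Dt' * Ft'))
        = toPS d (asmE μ G.F)
            * (toPS d (asmD μ G.D) * (toPS d (asmE μ G.E) * (Et' * (Dt' * Ft')))) := by
          simp only [mul_assoc]
      _ = toPS d (asmE μ G.F) * (toPS d (asmD μ G.D) * (Dt' * Ft')) := by rw [c1]
      _ = toPS d (asmE μ G.F) * Ft' := by rw [c2]
      _ = 1 := hFr
  have hT' : toPS d t' = Et' * (Dt' * Ft') := left_inv_eq_right_inv hT'T hTinv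
  have hTau : toPS d (fun i j r => t' (d - 1 - i) (d - 1 - j) r) = revPS (toPS d t') := by
    apply PowerSeries.ext; intro r; apply Matrix.ext; intro i j
    rw [coeff_toPS, coeff_revPS, coeff_toPS]
    have h1 : d - 1 - (i : ℕ) = ((Fin.rev i : Fin d) : ℕ) := by rw [Fin.val_rev]; omega
    have h2 : d - 1 - (j : ℕ) = ((Fin.rev j : Fin d) : ℕ) := by rw [Fin.val_rev]; omega
    rw [h1, h2]
  have hG2 : toPS d (fun i j r => t' (d - 1 - i) (d - 1 - j) r)
      = toPS d (asmE (fun b => μ (n - 1 - b)) G2.F)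
        * (toPS d (asmD (fun b => μ (n - 1 - b)) G2.D)
            * toPS d (asmE (fun b => μ (n - 1 - b)) G2.E)) := gauss_eq G2 hd'
  have hEt'up : IsUp (bβ μ d) Et' := coeff_inv_mem (upS (A := A) (bβ μ d)) hEr hEcc (toPS_E_up G)
  have hEt'uni : IsUni (bβ μ d) Et' := inv_uni_up _ hEr (toPS_E_up G) (toPS_E_uni G hd) hEt'up
  have hFt'lw : IsLw (bβ μ d) Ft' := coeff_inv_mem (lwS (A := A) (bβ μ d)) hFr hFcc (toPS_F_lw G)
  have hFt'uni : IsUni (bβ μ d) Ft' := inv_uni_lw _ hFr (toPS_F_lw G) (toPS_F_uni G hd) hFt'lw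
  have hDt'dg : IsDg (bβ μ d) Dt' := coeff_inv_mem (dgS (A := A) (bβ μ d)) hDr hDcc (toPS_D_dg G.D)
  have hEt'cc : constantCoeff Et' = 1 := cc_right_inv hEr hEcc
  have hFt'cc : constantCoeff Ft' = 1 := cc_right_inv hFr hFcc
  have hDt'cc : constantCoeff Dt' = 1 := cc_right_inv hDr hDcc
  obtain ⟨hFF, hDD, hEE⟩ := gauss_unique (bβ (fun b => μ (n - 1 - b)) d)
    (toPS_F_lw G2) (toPS_F_uni G2 hd')
    (isLw_rev hd hEt'up) (isUni_rev hd hEt'uni) (cc_revPS hEt'cc)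
    (toPS_D_dg G2.D) (toPS_D_cc G2 hd')
    (isDg_rev hd hDt'dg) (cc_revPS hDt'cc)
    (toPS_E_up G2) (toPS_E_uni G2 hd') (toPS_E_cc G2 hd')
    (isUp_rev hd hFt'lw) (isUni_rev hd hFt'uni)
    (by rw [← hG2, hTau, hT', revPS_mul, revPS_mul])
  refine ⟨?_, ?_, ?_⟩
  · -- D statement
    intro a i j r ha hi hj
    have hμa : (fun b => μ (n - 1 - b)) (n - 1 - a) = μ a := by
      show μ (n - 1 - (n - 1 - a)) = μ a
      congr 1
      omega
    have hna : n - 1 - a < n := by omega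
    have hbi : μ a - 1 - i < (fun b => μ (n - 1 - b)) (n - 1 - a) := by rw [hμa]; omega
    have hbj : μ a - 1 - j < (fun b => μ (n - 1 - b)) (n - 1 - a) := by rw [hμa]; omega
    have hRHS : G2.D' (n - 1 - a) (μ a - 1 - i) (μ a - 1 - j) r
        = coeff r (toPS d (asmD (fun b => μ (n - 1 - b)) G2.D'))
            ⟨off (fun b => μ (n - 1 - b)) (n - 1 - a) + (μ a - 1 - i), lt_off hd' hna hbi⟩
            ⟨off (fun b => μ (n - 1 - b)) (n - 1 - a) + (μ a - 1 - j), lt_off hd' hna hbj⟩ := by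
      rw [coeff_toPS]
      show _ = asmD (fun b => μ (n - 1 - b)) G2.D'
          (off (fun b => μ (n - 1 - b)) (n - 1 - a) + (μ a - 1 - i))
          (off (fun b => μ (n - 1 - b)) (n - 1 - a) + (μ a - 1 - j)) r
      rw [asmD_apply_both (μ := fun b => μ (n - 1 - b)) (c := n - 1 - a) G2.D' hbi hbj]
    have h1 : toPS d (asmD (fun b => μ (n - 1 - b)) G2.D)
        * toPS d (asmD (fun b => μ (n - 1 - b)) G2.D') = 1 :=
      asmD_mul_asmD_eq_one hd' G2.D G2.D' G2.D_inv
    have h2 : revPS (toPS d (asmD μ G.D)) * toPS d (asmD (fun b => μ (n - 1 - b)) G2.D) = 1 := by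
      rw [hDD, ← revPS_mul, hDr, revPS_one]
    have h3 : toPS d (asmD (fun b => μ (n - 1 - b)) G2.D') = revPS (toPS d (asmD μ G.D)) :=
      (left_inv_eq_right_inv h2 h1).symm
    rw [hRHS, h3, coeff_revPS, rev_finOf hd hd' ha hi hna hbi, rev_finOf hd hd' ha hj hna hbj, coeff_toPS]
    show G.D a i j r = asmD μ G.D (off μ a + i) (off μ a + j) r
    rw [asmD_apply_both G.D hi hj]
  · -- E statement
    intro a h k r han hh hk
    have ha : a < n := by omega
    have hμa : (fun b => μ (n - 1 - b)) (n - 1 - a) = μ a := by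
      show μ (n - 1 - (n - 1 - a)) = μ a
      congr 1
      omega
    have hμa1 : (fun b => μ (n - 1 - b)) (n - 1 - (a + 1)) = μ (a + 1) := by
      show μ (n - 1 - (n - 1 - (a + 1))) = μ (a + 1)
      congr 1
      omega
    have hna : n - 1 - a < n := by omega
    have hna1 : n - 1 - (a + 1) < n := by omega
    have hbi : μ a - 1 - h < (fun b => μ (n - 1 - b)) (n - 1 - a) := by rw [hμa]; omega
    have hbj : μ (a + 1) - 1 - k < (fun b => μ (n - 1 - b)) (n - 1 - (a + 1)) := by
      rw [hμa1]; omega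
    have hbI : blkIdx μ (off μ a + h) = a := blkIdx_off μ hh
    have hbJ : blkIdx μ (off μ (a + 1) + k) = a + 1 := blkIdx_off μ hk
    have hIJ : (⟨off μ a + h, lt_off hd ha hh⟩ : Fin d)
        ≠ (⟨off μ (a + 1) + k, lt_off hd han hk⟩ : Fin d) := by
      intro hq
      have h2 : off μ a + h = off μ (a + 1) + k := congrArg Fin.val hq
      have h3 := congrArg (blkIdx μ) h2
      rw [hbI, hbJ] at h3
      omega
    have hadj : ∀ rr, coeff rr Et'
          (⟨off μ a + h, lt_off hd ha hh⟩ : Fin d)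
          (⟨off μ (a + 1) + k, lt_off hd han hk⟩ : Fin d)
        = - coeff rr (toPS d (asmE μ G.E))
            (⟨off μ a + h, lt_off hd ha hh⟩ : Fin d)
            (⟨off μ (a + 1) + k, lt_off hd han hk⟩ : Fin d) := by
      refine inv_adj hEr hIJ ?_ ?_
      · intro e1 e2 g hg
        have hgd : (g : ℕ) < off μ n := by rw [hd]; exact g.isLt
        obtain ⟨hgn, hg1, hg2⟩ := blkIdx_spec μ hgd
        rcases lt_trichotomy (blkIdx μ (g : ℕ)) (a + 1) with hlt | heq2 | hgt
        · have h1 : coeff e1 (toPS d (asmE μ G.E))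
              (⟨off μ a + h, lt_off hd ha hh⟩ : Fin d) g
              = coeff e1 (1 : MS A d)
                  (⟨off μ a + h, lt_off hd ha hh⟩ : Fin d) g := by
            rcases lt_trichotomy (blkIdx μ (g : ℕ)) a with hlt2 | heq3 | hgt2
            · rw [(toPS_E_up G).entry (i := (⟨off μ a + h, lt_off hd ha hh⟩ : Fin d)) (j := g)
                (show blkIdx μ (g : ℕ) < blkIdx μ (off μ a + h) by rw [hbI]; omega) e1,
                coeff_one_entry, if_neg ?_]
              rintro ⟨rfl, -⟩
              rw [show ((⟨off μ a + h, lt_off hd ha hh⟩ : Fin d) : ℕ) = off μ a + h from rfl,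
                hbI] at hlt2
              omega
            · rw [toPS_E_uni G hd e1 _ g
                (show blkIdx μ (off μ a + h) = blkIdx μ (g : ℕ) by rw [hbI]; omega),
                coeff_one_entry]
            · omega
          rw [map_sub, Matrix.sub_apply, h1, sub_self, zero_mul]
        · have h2 : coeff e2 Et' g
              (⟨off μ (a + 1) + k, lt_off hd han hk⟩ : Fin d) = 0 := by
            rw [hEt'uni e2 g _
              (show blkIdx μ (g : ℕ) = blkIdx μ (off μ (a + 1) + k) by rw [hbJ]; omega),
              if_neg (by rintro ⟨rfl, -⟩; exact hg rfl)]
          rw [h2, mul_zero]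
        · have h2 : coeff e2 Et' g
              (⟨off μ (a + 1) + k, lt_off hd han hk⟩ : Fin d) = 0 :=
            hEt'up.entry (i := g) (j := (⟨off μ (a + 1) + k, lt_off hd han hk⟩ : Fin d))
              (show blkIdx μ (off μ (a + 1) + k) < blkIdx μ (g : ℕ) by rw [hbJ]; omega) e2
          rw [h2, mul_zero]
      · intro e
        rw [hEt'uni e _ _ rfl]
        simp
    have hF2 : G2.F (n - 1 - a) (n - 2 - a) (μ a - 1 - h) (μ (a + 1) - 1 - k) r
        = coeff r (toPS d (asmE (fun b => μ (n - 1 - b)) G2.F))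
            ⟨off (fun b => μ (n - 1 - b)) (n - 1 - a) + (μ a - 1 - h), lt_off hd' hna hbi⟩
            ⟨off (fun b => μ (n - 1 - b)) (n - 1 - (a + 1)) + (μ (a + 1) - 1 - k),
              lt_off hd' hna1 hbj⟩ := by
      rw [coeff_toPS]
      show _ = asmE (fun b => μ (n - 1 - b)) G2.F
          (off (fun b => μ (n - 1 - b)) (n - 1 - a) + (μ a - 1 - h))
          (off (fun b => μ (n - 1 - b)) (n - 1 - (a + 1)) + (μ (a + 1) - 1 - k)) r
      rw [asmE_apply (μ := fun b => μ (n - 1 - b)) (a := n - 1 - a) (b := n - 1 - (a + 1))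
        G2.F hbi hbj]
      rw [show n - 2 - a = n - 1 - (a + 1) by omega]
    rw [hF2, hFF, coeff_revPS, rev_finOf hd hd' ha hh hna hbi, rev_finOf hd hd' han hk hna1 hbj,
      hadj r, neg_neg, coeff_toPS]
    show G.E a (a + 1) h k r = asmE μ G.E (off μ a + h) (off μ (a + 1) + k) r
    rw [asmE_apply G.E hh hk]
  · -- F statement
    intro a h k r han hh hk
    have ha : a < n := by omega
    have hμa : (fun b => μ (n - 1 - b)) (n - 1 - a) = μ a := by
      show μ (n - 1 - (n - 1 - a)) = μ a
      congr 1
      omega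
    have hμa1 : (fun b => μ (n - 1 - b)) (n - 1 - (a + 1)) = μ (a + 1) := by
      show μ (n - 1 - (n - 1 - (a + 1))) = μ (a + 1)
      congr 1
      omega
    have hna : n - 1 - a < n := by omega
    have hna1 : n - 1 - (a + 1) < n := by omega
    have hbi : μ a - 1 - h < (fun b => μ (n - 1 - b)) (n - 1 - a) := by rw [hμa]; omega
    have hbj : μ (a + 1) - 1 - k < (fun b => μ (n - 1 - b)) (n - 1 - (a + 1)) := by
      rw [hμa1]; omega
    have hbI : blkIdx μ (off μ (a + 1) + k) = a + 1 := blkIdx_off μ hk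
    have hbJ : blkIdx μ (off μ a + h) = a := blkIdx_off μ hh
    have hIJ : (⟨off μ (a + 1) + k, lt_off hd han hk⟩ : Fin d)
        ≠ (⟨off μ a + h, lt_off hd ha hh⟩ : Fin d) := by
      intro hq
      have h2 : off μ (a + 1) + k = off μ a + h := congrArg Fin.val hq
      have h3 := congrArg (blkIdx μ) h2
      rw [hbI, hbJ] at h3
      omega
    have hadj : ∀ rr, coeff rr Ft'
          (⟨off μ (a + 1) + k, lt_off hd han hk⟩ : Fin d)
          (⟨off μ a + h, lt_off hd ha hh⟩ : Fin d)
        = - coeff rr (toPS d (asmE μ G.F))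
            (⟨off μ (a + 1) + k, lt_off hd han hk⟩ : Fin d)
            (⟨off μ a + h, lt_off hd ha hh⟩ : Fin d) := by
      refine inv_adj hFr hIJ ?_ ?_
      · intro e1 e2 g hg
        have hgd : (g : ℕ) < off μ n := by rw [hd]; exact g.isLt
        obtain ⟨hgn, hg1, hg2⟩ := blkIdx_spec μ hgd
        rcases lt_trichotomy (blkIdx μ (g : ℕ)) a with hlt | heq2 | hgt
        · have h2 : coeff e2 Ft' g
              (⟨off μ a + h, lt_off hd ha hh⟩ : Fin d) = 0 :=
            hFt'lw.entry (i := g) (j := (⟨off μ a + h, lt_off hd ha hh⟩ : Fin d))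
              (show blkIdx μ (g : ℕ) < blkIdx μ (off μ a + h) by rw [hbJ]; omega) e2
          rw [h2, mul_zero]
        · have h2 : coeff e2 Ft' g
              (⟨off μ a + h, lt_off hd ha hh⟩ : Fin d) = 0 := by
            rw [hFt'uni e2 g _
              (show blkIdx μ (g : ℕ) = blkIdx μ (off μ a + h) by rw [hbJ]; omega),
              if_neg (by rintro ⟨rfl, -⟩; exact hg rfl)]
          rw [h2, mul_zero]
        · have h1 : coeff e1 (toPS d (asmE μ G.F))
              (⟨off μ (a + 1) + k, lt_off hd han hk⟩ : Fin d) g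
              = coeff e1 (1 : MS A d)
                  (⟨off μ (a + 1) + k, lt_off hd han hk⟩ : Fin d) g := by
            rcases lt_trichotomy (blkIdx μ (g : ℕ)) (a + 1) with hlt2 | heq3 | hgt2
            · omega
            · rw [toPS_F_uni G hd e1 _ g
                (show blkIdx μ (off μ (a + 1) + k) = blkIdx μ (g : ℕ) by rw [hbI]; omega),
                coeff_one_entry]
            · rw [(toPS_F_lw G).entry (i := (⟨off μ (a + 1) + k, lt_off hd han hk⟩ : Fin d))
                (j := g)
                (show blkIdx μ (off μ (a + 1) + k) < blkIdx μ (g : ℕ) by rw [hbI]; omega) e1,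
                coeff_one_entry, if_neg ?_]
              rintro ⟨rfl, -⟩
              rw [show ((⟨off μ (a + 1) + k, lt_off hd han hk⟩ : Fin d) : ℕ)
                  = off μ (a + 1) + k from rfl, hbI] at hgt2
              omega
          rw [map_sub, Matrix.sub_apply, h1, sub_self, zero_mul]
      · intro e
        rw [hFt'uni e _ _ rfl]
        simp
    have hE2 : G2.E (n - 2 - a) (n - 1 - a) (μ (a + 1) - 1 - k) (μ a - 1 - h) r
        = coeff r (toPS d (asmE (fun b => μ (n - 1 - b)) G2.E))
            ⟨off (fun b => μ (n - 1 - b)) (n - 1 - (a + 1)) + (μ (a + 1) - 1 - k),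
              lt_off hd' hna1 hbj⟩
            ⟨off (fun b => μ (n - 1 - b)) (n - 1 - a) + (μ a - 1 - h), lt_off hd' hna hbi⟩ := by
      rw [coeff_toPS]
      show _ = asmE (fun b => μ (n - 1 - b)) G2.E
          (off (fun b => μ (n - 1 - b)) (n - 1 - (a + 1)) + (μ (a + 1) - 1 - k))
          (off (fun b => μ (n - 1 - b)) (n - 1 - a) + (μ a - 1 - h)) r
      rw [asmE_apply (μ := fun b => μ (n - 1 - b)) (a := n - 1 - (a + 1)) (b := n - 1 - a)
        G2.E hbj hbi]
      rw [show n - 2 - a = n - 1 - (a + 1) by omega]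
    rw [hE2, hEE, coeff_revPS, rev_finOf hd hd' ha hh hna hbi, rev_finOf hd hd' han hk hna1 hbj,
      hadj r, neg_neg, coeff_toPS]
    show G.F (a + 1) a k h r = asmE μ G.F (off μ (a + 1) + k) (off μ a + h) r
    rw [asmE_apply G.F hk hh]

end Aux

/-- Under the isomorphism `ζ_{M|N} : Y_μ(s) → Y_{←μ}(s†)`, given by
`ζ(t_{ij}(u)) = t'_{rev i, rev j}(u)`, the Gauss blocks transform as
`ζ(D_{a;i,j}(u)) = D'_{n+1-a; μ_a+1-i, μ_a+1-j}(u)`,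
`ζ(E_{a;h,k}(u)) = -F_{n-a; μ_a+1-h, μ_{a+1}+1-k}(u)`,
`ζ(F_{a;k,h}(u)) = -E_{n-a; μ_{a+1}+1-k, μ_a+1-h}(u)` (1-based, 0-based below), where the
right-hand blocks are the Gauss blocks, with respect to the reversed composition `←μ`,
of the matrix `τ` with `τ_{ij}(u) = t'_{rev i, rev j}(u)` (which realizes `ζ` inside one
algebra, since `ζ` identifies the generating matrix of `Y_{←μ}(s†)` with `τ`). -/
theorem statement14 [Ring A] [Algebra ℂ A] {d n : ℕ} {p : ℕ → ZMod 2} {μ : ℕ → ℕ}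
    (S : RTT A d p) (t' : ℕ → ℕ → ℕ → A)
    (hinv : ∀ i j r : ℕ, i < d → j < d →
      ∑ g ∈ Finset.range d, ∑ e ∈ Finset.range (r + 1), S.t i g e * t' g j (r - e) =
        if i = j ∧ r = 0 then 1 else 0)
    (hinv' : ∀ i j r : ℕ, i < d → j < d →
      ∑ g ∈ Finset.range d, ∑ e ∈ Finset.range (r + 1), t' i g e * S.t g j (r - e) =
        if i = j ∧ r = 0 then 1 else 0)
    (G : Gauss S.t n μ)
    (G2 : Gauss (fun i j r => t' (d - 1 - i) (d - 1 - j) r) n (fun b => μ (n - 1 - b)))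
    (hd : off μ n = d) :
    (∀ a i j r : ℕ, a < n → i < μ a → j < μ a →
      G.D a i j r = G2.D' (n - 1 - a) (μ a - 1 - i) (μ a - 1 - j) r) ∧
    (∀ a h k r : ℕ, a + 1 < n → h < μ a → k < μ (a + 1) →
      G.E a (a + 1) h k r =
        - G2.F (n - 1 - a) (n - 2 - a) (μ a - 1 - h) (μ (a + 1) - 1 - k) r) ∧
    (∀ a h k r : ℕ, a + 1 < n → h < μ a → k < μ (a + 1) →
      G.F (a + 1) a k h r =
        - G2.E (n - 2 - a) (n - 1 - a) (μ (a + 1) - 1 - k) (μ a - 1 - h) r) :=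
  main14 S.t t' hinv hinv' G G2 hd

end SuperYangian
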